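/- Let φ be an E3-CNF formula with m clauses C_1, …, C_m over variables x_1, …, x_n, let y, z_1, z_2 be fresh variables, and let m_1, m_2 ≥ 1 be integers. Let ψ consist of the clauses C_j ∨ y for every j ∈ [m], together with m_1 copies of ¬y ∨ z_1 ∨ ¬z_2 and m_2 copies of ¬y ∨ ¬z_1 ∨ z_2. Let α_start assign 1 to all of x_1,…,x_n and (y,z_1,z_2) = (1,1,1), and let α_end assign 0 to all of x_1,…,x_n and (y,z_1,z_2) = (1,0,0). Suppose δ > 0 is such that every assignment for φ violates at least δ·m clauses of φ. Then every reconfiguration sequence from α_start to α_end contains an assignment that violates at least min{δ·m, m_1, m_2} clauses of ψ; in particular, if m_1 = m_2 = δ·m (with δ·m an integer), then opt_ψ(α_start ↔ α_end) ≤ 1 - δ/(1 + 2δ). -/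

import Mathlib

/-- An assignment maps each Boolean variable to a truth value. -/
abbrev Assignment (V : Type) := V → Bool

/-- A literal is a variable together with a polarity (`true` = positive);
a clause is a disjunction of literals, represented as the list of its literals
(its width is the length of this list). -/
abbrev Clause (V : Type) := List (V × Bool)

/-- A CNF formula is a conjunction of clauses, represented as a list
(clauses are counted with multiplicity). -/
abbrev CNF (V : Type) := List (Clause V)

/-- An assignment satisfies a clause if it makes at least one literal true. -/
def satClause {V : Type} (α : Assignment V) (C : Clause V) : Bool :=
  C.any fun l => α l.1 == l.2

/-- An assignment satisfies a CNF formula if it satisfies every clause. -/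
def satCNF {V : Type} (α : Assignment V) (φ : CNF V) : Bool :=
  φ.all fun C => satClause α C

/-- The fraction of clauses of `φ` satisfied by `α`. -/
noncomputable def val {V : Type} (φ : CNF V) (α : Assignment V) : ℝ :=
  ((φ.filter fun C => satClause α C).length : ℝ) / (φ.length : ℝ)

/-- The number of clauses of `φ` violated by `α`. -/
def numViol {V : Type} (φ : CNF V) (α : Assignment V) : ℕ :=
  (φ.filter fun C => !satClause α C).length

/-- Two assignments differ on at most one variable. -/
def Adjacent {V : Type} (α β : Assignment V) : Prop :=
  ∀ v w, α v ≠ β v → α w ≠ β w → v = w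

/-- `seq` is a reconfiguration sequence from `s` to `e`: a nonempty finite sequence of
assignments starting at `s`, ending at `e`, in which consecutive assignments differ
on at most one variable. -/
def IsReconfSeq {V : Type} (s e : Assignment V) (seq : List (Assignment V)) : Prop :=
  seq ≠ [] ∧ seq.head? = some s ∧ seq.getLast? = some e ∧ seq.Chain' Adjacent

/-- The value of a reconfiguration sequence: the minimum of `val φ` over its members. -/
noncomputable def seqVal {V : Type} (φ : CNF V) (seq : List (Assignment V)) : ℝ :=
  sInf (val φ '' {α | α ∈ seq})

/-- `opt_φ(s ↔ e)`: the optimal (maximum) value over all reconfiguration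
sequences from `s` to `e`. -/
noncomputable def optVal {V : Type} (φ : CNF V) (s e : Assignment V) : ℝ :=
  sSup (seqVal φ '' {seq | IsReconfSeq s e seq})


section Aux

lemma satClause_mapInl {n : ℕ} (β : Assignment (Fin n ⊕ Fin 3)) (C : Clause (Fin n)) :
    satClause β (C.map fun l => ((Sum.inl l.1 : Fin n ⊕ Fin 3), l.2))
      = satClause (fun v => β (Sum.inl v)) C := by
  induction C with
  | nil => rfl
  | cons a t ih => simp [satClause] at ih ⊢; rw [ih]

lemma chain_head_last {X Y : Type} (r : X → X → Prop) (g : X → Y) (P : X → Prop)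
    (hstep : ∀ a b, P a → P b → r a b → g a = g b) :
    ∀ (l : List X), l.Chain' r → (∀ x ∈ l, P x) →
      ∀ s e, l.head? = some s → l.getLast? = some e → g s = g e := by
  intro l
  induction l with
  | nil => intro _ _ s e hs _; simp at hs
  | cons a t ih =>
    intro hch hP s e hs he
    cases t with
    | nil =>
      simp at hs he; subst hs; subst he; rfl
    | cons b t' =>
      have hab : r a b := (List.isChain_cons_cons.mp hch).1
      have h1 : g a = g b :=
        hstep a b (hP a (by simp)) (hP b (by simp)) hab
      have h2 : g b = g e := by
        refine ih (List.isChain_cons_cons.mp hch).2 (fun x hx => hP x (by simp [hx])) b e rfl ?_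
        simpa [List.getLast?_cons_cons] using he
      have hsa : s = a := by simpa using hs.symm
      rw [hsa, h1, h2]

lemma val_nonneg {V : Type} (φ : CNF V) (α : Assignment V) : 0 ≤ val φ α := by
  unfold val; positivity

lemma length_filter_sat {V : Type} (ψ : CNF V) (β : Assignment V) :
    ((ψ.filter fun C => satClause β C).length : ℝ) = (ψ.length : ℝ) - (numViol ψ β : ℝ) := by
  have h := (List.length_eq_countP_add_countP (fun C => satClause β C) : ψ.length = _)
  have h2 : ψ.length = (ψ.filter fun C => satClause β C).length + numViol ψ β := by
    simpa [numViol, List.countP_eq_length_filter, decide_not] using h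
  rw [h2]; push_cast; ring

end Aux

/-- Soundness of the reduction to `{3,4}`-SAT Reconfiguration: with `ψ`,
`αs`, `αe` as in the reduction, if `δ > 0` is such that every assignment for `φ` violates at
least `δ·m` clauses of `φ`, then every reconfiguration sequence from `αs` to `αe` contains
an assignment violating at least `min {δ·m, m₁, m₂}` clauses of `ψ`; in particular, if
`m₁ = m₂ = δ·m` (so `δ·m` is an integer) then `opt_ψ(αs ↔ αe) ≤ 1 - δ/(1 + 2δ)`. -/
theorem stmt14 {n : ℕ} (φ : CNF (Fin n)) (h3 : ∀ C ∈ φ, C.length = 3)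
    (m₁ m₂ : ℕ) (hm₁ : 1 ≤ m₁) (hm₂ : 1 ≤ m₂)
    (ψ : CNF (Fin n ⊕ Fin 3))
    (hψ : ψ = (φ.map fun C => C.map (fun l => (Sum.inl l.1, l.2)) ++ [(Sum.inr 0, true)])
        ++ List.replicate m₁ [(Sum.inr 0, false), (Sum.inr 1, true), (Sum.inr 2, false)]
        ++ List.replicate m₂ [(Sum.inr 0, false), (Sum.inr 1, false), (Sum.inr 2, true)])
    (αs αe : Assignment (Fin n ⊕ Fin 3))
    (hαs : αs = fun _ => true)
    (hαe : αe = Sum.elim (fun _ => false) fun i => i == 0)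
    (δ : ℝ) (hδ : 0 < δ)
    (hviol : ∀ α : Assignment (Fin n), δ * (φ.length : ℝ) ≤ (numViol φ α : ℝ)) :
    (∀ seq, IsReconfSeq αs αe seq →
        ∃ β ∈ seq,
          min (δ * (φ.length : ℝ)) (min (m₁ : ℝ) (m₂ : ℝ)) ≤ (numViol ψ β : ℝ)) ∧
      ((m₁ : ℝ) = δ * (φ.length : ℝ) → (m₂ : ℝ) = δ * (φ.length : ℝ) →
        optVal ψ αs αe ≤ 1 - δ / (1 + 2 * δ)) := by

  subst hψ hαs hαe
  set m : ℕ := φ.length with hm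
  set g : Clause (Fin n) → Clause (Fin n ⊕ Fin 3) :=
    fun C => C.map (fun l => (Sum.inl l.1, l.2)) ++ [(Sum.inr 0, true)] with hg
  set c₁ : Clause (Fin n ⊕ Fin 3) :=
    [(Sum.inr 0, false), (Sum.inr 1, true), (Sum.inr 2, false)] with hc₁
  set c₂ : Clause (Fin n ⊕ Fin 3) :=
    [(Sum.inr 0, false), (Sum.inr 1, false), (Sum.inr 2, true)] with hc₂
  set ψ : CNF (Fin n ⊕ Fin 3) :=
    φ.map g ++ List.replicate m₁ c₁ ++ List.replicate m₂ c₂ with hψ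
  -- split of numViol
  have hsplit : ∀ β : Assignment (Fin n ⊕ Fin 3),
      numViol ψ β =
        List.countP (fun C => !satClause β C) (φ.map g)
          + List.countP (fun C => !satClause β C) (List.replicate m₁ c₁)
          + List.countP (fun C => !satClause β C) (List.replicate m₂ c₂) := by
    intro β
    simp [numViol, hψ, ← List.countP_eq_length_filter, List.countP_append]
    ring
  have key : ∀ β : Assignment (Fin n ⊕ Fin 3),
      (β (Sum.inr 0) = true ∧ β (Sum.inr 1) = β (Sum.inr 2)) ∨
        min (δ * (m : ℝ)) (min (m₁ : ℝ) (m₂ : ℝ)) ≤ (numViol ψ β : ℝ) := by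
    intro β
    by_cases h0 : β (Sum.inr 0) = true
    · by_cases h12 : β (Sum.inr 1) = β (Sum.inr 2)
      · exact Or.inl ⟨h0, h12⟩
      · right
        cases h1 : β (Sum.inr 1) <;> cases h2 : β (Sum.inr 2) <;>
          rw [h1, h2] at h12 <;> try exact absurd rfl h12
        · -- z₁ = false, z₂ = true : clause c₁ violated, m₁ copies
          have hc : satClause β c₁ = false := by simp [hc₁, satClause, h0, h1, h2]
          have : m₁ ≤ numViol ψ β := by
            rw [hsplit β]
            have : List.countP (fun C => !satClause β C) (List.replicate m₁ c₁) = m₁ := by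
              simp [List.countP_eq_length_filter, List.filter_replicate, hc]
            omega
          calc min (δ * (m : ℝ)) (min (m₁ : ℝ) (m₂ : ℝ)) ≤ (m₁ : ℝ) :=
                le_trans (min_le_right _ _) (min_le_left _ _)
            _ ≤ (numViol ψ β : ℝ) := by exact_mod_cast this
        · -- z₁ = true, z₂ = false : clause c₂ violated, m₂ copies
          have hc : satClause β c₂ = false := by simp [hc₂, satClause, h0, h1, h2]
          have : m₂ ≤ numViol ψ β := by
            rw [hsplit β]
            have : List.countP (fun C => !satClause β C) (List.replicate m₂ c₂) = m₂ := by
              simp [List.countP_eq_length_filter, List.filter_replicate, hc]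
            omega
          calc min (δ * (m : ℝ)) (min (m₁ : ℝ) (m₂ : ℝ)) ≤ (m₂ : ℝ) :=
                le_trans (min_le_right _ _) (min_le_right _ _)
            _ ≤ (numViol ψ β : ℝ) := by exact_mod_cast this
    · -- y = false : all first-part clauses reduce to φ clauses
      right
      have h0' : β (Sum.inr 0) = false := by
        cases h : β (Sum.inr 0) <;> simp_all
      set α : Assignment (Fin n) := fun v => β (Sum.inl v) with hα
      have hcnt : List.countP (fun C => !satClause β C) (φ.map g) = numViol φ α := by
        rw [List.countP_map, numViol, ← List.countP_eq_length_filter]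
        congr 1
        funext C
        simp [Function.comp, hg, satClause, List.any_append, h0']
        rfl
      have hle : numViol φ α ≤ numViol ψ β := by rw [hsplit β, hcnt]; omega
      calc min (δ * (m : ℝ)) (min (m₁ : ℝ) (m₂ : ℝ)) ≤ δ * (m : ℝ) := min_le_left _ _
        _ ≤ (numViol φ α : ℝ) := hviol α
        _ ≤ (numViol ψ β : ℝ) := by exact_mod_cast hle
  -- Part 1
  have main : ∀ seq, IsReconfSeq (fun _ => true)
      (Sum.elim (fun _ => false) fun i => i == 0) seq →
      ∃ β ∈ seq, min (δ * (m : ℝ)) (min (m₁ : ℝ) (m₂ : ℝ)) ≤ (numViol ψ β : ℝ) := by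
    intro seq ⟨hne, hh, hl, hch⟩
    by_contra hcon
    push_neg at hcon
    have hbad : ∀ β ∈ seq, β (Sum.inr 0) = true ∧ β (Sum.inr 1) = β (Sum.inr 2) := by
      intro β hβ
      rcases key β with h | h
      · exact h
      · exact absurd h (not_le.mpr (hcon β hβ))
    have := chain_head_last Adjacent (fun β => β (Sum.inr 1))
      (fun β => β (Sum.inr 0) = true ∧ β (Sum.inr 1) = β (Sum.inr 2))
      (fun a b ha hb hab => by
        by_contra hne'
        have h2ne : a (Sum.inr 2) ≠ b (Sum.inr 2) := by
          rw [← ha.2, ← hb.2]; exact hne'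
        have := hab (Sum.inr 1) (Sum.inr 2) hne' h2ne
        simp at this)
      seq hch hbad _ _ hh hl
    simp at this
  refine ⟨main, ?_⟩
  -- Part 2
  intro h1 h2
  have hmpos : (0 : ℝ) < (m : ℝ) := by
    have h1' : (1 : ℝ) ≤ (m₁ : ℝ) := by exact_mod_cast hm₁
    nlinarith [h1 ▸ h1']
  have h2δ : (0 : ℝ) < 1 + 2 * δ := by linarith
  have hbound0 : (0 : ℝ) ≤ 1 - δ / (1 + 2 * δ) := by
    rw [sub_nonneg, div_le_one h2δ]; linarith
  apply Real.sSup_le _ hbound0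
  rintro x ⟨seq, hseq, rfl⟩
  obtain ⟨β, hβ, hb⟩ := main seq hseq
  rw [h1, h2, min_self, min_self] at hb
  have hLψ : (ψ.length : ℝ) = (m : ℝ) + δ * (m : ℝ) + δ * (m : ℝ) := by
    have hL0 : (ψ.length : ℝ) = (m : ℝ) + (m₁ : ℝ) + (m₂ : ℝ) := by
      simp [hψ]
      push_cast; ring
    rw [hL0, h1, h2]
  have hLpos : (0 : ℝ) < (ψ.length : ℝ) := by rw [hLψ]; nlinarith
  have hval : val ψ β ≤ 1 - δ / (1 + 2 * δ) := by
    rw [val, length_filter_sat]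
    have heq : (1 : ℝ) - δ / (1 + 2 * δ)
        = ((ψ.length : ℝ) - δ * (m : ℝ)) / (ψ.length : ℝ) := by
      rw [hLψ]
      field_simp
      ring
    rw [heq]
    gcongr
  calc seqVal ψ seq ≤ val ψ β := by
        apply csInf_le
        · exact ⟨0, by rintro x ⟨γ, _, rfl⟩; exact val_nonneg ψ γ⟩
        · exact ⟨β, hβ, rfl⟩
    _ ≤ 1 - δ / (1 + 2 * δ) := hval
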